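/- Let A and B be nonempty finite separated sets of points in the plane such that A ∪ B is in general position. Then the relation <_B is a strict partial order on A (it is asymmetric and transitive), and two distinct points x, y ∈ A are incomparable in <_B if and only if the line through x and y intersects the convex hull of B. -/

import Mathlib

open scoped Classical

/-- Points in the plane. -/
abbrev Pt := ℝ × ℝ

/-- A finite planar point set is in general position if no three of its points are collinear. -/
def GenPos (P : Finset Pt) : Prop :=
  ∀ p ∈ P, ∀ q ∈ P, ∀ r ∈ P, p ≠ q → p ≠ r → q ≠ r → ¬ Collinear ℝ ({p, q, r} : Set Pt)

/-- Two closed segments cross: their intersection is a single point lying in the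
relative interior (open segment) of both. -/
def SegCross (s t : Pt × Pt) : Prop :=
  ∃ x : Pt, segment ℝ s.1 s.2 ∩ segment ℝ t.1 t.2 = {x} ∧
    x ∈ openSegment ℝ s.1 s.2 ∧ x ∈ openSegment ℝ t.1 t.2

/-- A crossing family of size `k` in `P`: `k` segments with endpoints in `P`, pairwise crossing. -/
def CrossingFamily (P : Finset Pt) (k : ℕ) : Prop :=
  ∃ F : Finset (Pt × Pt), F.card = k ∧ (∀ e ∈ F, e.1 ∈ P ∧ e.2 ∈ P) ∧
    ∀ e ∈ F, ∀ f ∈ F, e ≠ f → SegCross e f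

/-- A non-crossing family of size `m` in `P`. -/
def NonCrossingFamily (P : Finset Pt) (m : ℕ) : Prop :=
  ∃ P₁ P₂ P₃ P₄ : Finset Pt,
    P₁ ⊆ P ∧ P₂ ⊆ P ∧ P₃ ⊆ P ∧ P₄ ⊆ P ∧
    Disjoint P₁ P₂ ∧ Disjoint P₁ P₃ ∧ Disjoint P₁ P₄ ∧
    Disjoint P₂ P₃ ∧ Disjoint P₂ P₄ ∧ Disjoint P₃ P₄ ∧
    m ≤ P₁.card ∧ m ≤ P₂.card ∧ m ≤ P₃.card ∧ m ≤ P₄.card ∧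
    ∀ p₁ ∈ P₁, ∀ p₂ ∈ P₂, ∀ p₃ ∈ P₃, ∀ p₄ ∈ P₄,
      p₄ ∈ interior (convexHull ℝ ({p₁, p₂, p₃} : Set Pt))

/-- A point set is in convex position if no point lies in the convex hull of the others. -/
def ConvexPos (S : Set Pt) : Prop := ∀ p ∈ S, p ∉ convexHull ℝ (S \ {p})

/-- A convex bundle of size `k` and width `m` in `P`. -/
def ConvexBundle (P : Finset Pt) (k m : ℕ) : Prop :=
  ∃ C : Fin k → Finset Pt, (∀ i, C i ⊆ P) ∧
    (∀ i j, i ≠ j → Disjoint (C i) (C j)) ∧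
    (∀ i, m ≤ (C i).card) ∧
    ∀ f : Fin k → Pt, (∀ i, f i ∈ C i) → ConvexPos (Set.range f)

/-- Two finite point sets are separated if their convex hulls are disjoint. -/
def Separated (A B : Finset Pt) : Prop :=
  Disjoint (convexHull ℝ (A : Set Pt)) (convexHull ℝ (B : Set Pt))

/-- A line in the plane, given by an equation `a * x + b * y = c` with `(a, b) ≠ (0, 0)`. -/
structure Line where
  a : ℝ
  b : ℝ
  c : ℝ
  nondeg : a ≠ 0 ∨ b ≠ 0

/-- The set of points of a line. -/
def Line.toSet (L : Line) : Set Pt := {x | L.a * x.1 + L.b * x.2 = L.c}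

/-- Two lines are parallel if their normal vectors are proportional. -/
def Line.Parallel (L M : Line) : Prop := L.a * M.b - L.b * M.a = 0

/-- A spoke set of size `k` in `P`: `k` pairwise non-parallel lines such that every unbounded
cell of their arrangement (unbounded connected component of the complement of their union)
contains a point of `P`. -/
def SpokeSet (P : Finset Pt) (k : ℕ) : Prop :=
  ∃ ℓ : Fin k → Line,
    (∀ i j, i ≠ j → ¬ (ℓ i).Parallel (ℓ j)) ∧
    ∀ x : Pt, x ∈ (⋃ i, (ℓ i).toSet)ᶜ →
      ¬ Bornology.IsBounded (connectedComponentIn (⋃ i, (ℓ i).toSet)ᶜ x) →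
      ∃ p ∈ P, p ∈ connectedComponentIn (⋃ i, (ℓ i).toSet)ᶜ x

/-- `b` lies strictly to the left of the line through `x` and `y`, oriented from `x` to `y`. -/
def LeftOf (x y b : Pt) : Prop :=
  0 < (y.1 - x.1) * (b.2 - x.2) - (y.2 - x.2) * (b.1 - x.1)

/-- The relation `<_B`: `x <_B y` iff `B` is contained in the open half-plane to the left of
the line through `x` and `y` oriented from `x` towards `y`. -/
def LtRel (B : Finset Pt) (x y : Pt) : Prop :=
  x ≠ y ∧ ∀ b ∈ B, LeftOf x y b

/-- `x` and `y` are incomparable in `<_B`. -/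
def Incomp (B : Finset Pt) (x y : Pt) : Prop := ¬ LtRel B x y ∧ ¬ LtRel B y x

/-- `ι(A, <_B)`: the number of unordered pairs of distinct points of `A`
that are incomparable in `<_B`. -/
noncomputable def iota (A B : Finset Pt) : ℕ :=
  Set.ncard {s : Finset Pt | ∃ x y : Pt, x ≠ y ∧ s = {x, y} ∧ x ∈ A ∧ y ∈ A ∧ Incomp B x y}

/-- `A` and `B` (two `m`-element sets) form an `ε`-avoiding pair. -/
def EpsAvoiding (ε : ℝ) (m : ℕ) (A B : Finset Pt) : Prop :=
  ((iota A B : ℝ) + (iota B A : ℝ)) ≤ ε * (m : ℝ) ^ 2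

/-- The zone of a line `ℓ` in the arrangement of the lines `ℓs`: the union of all cells
(connected components of the complement) whose closure meets `ℓ`. -/
noncomputable def Zone (r : ℕ) (ℓs : Fin r → Line) (ℓ : Line) : Set Pt :=
  {y | ∃ x ∈ (⋃ i, (ℓs i).toSet)ᶜ,
    y ∈ connectedComponentIn (⋃ i, (ℓs i).toSet)ᶜ x ∧
    (closure (connectedComponentIn (⋃ i, (ℓs i).toSet)ᶜ x) ∩ ℓ.toSet).Nonempty}

def sg' (x y b : Pt) : ℝ := (y.1 - x.1) * (b.2 - x.2) - (y.2 - x.2) * (b.1 - x.1)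

lemma sg'_swap (x y b : Pt) : sg' y x b = - sg' x y b := by simp only [sg']; ring

lemma sg'_cycle (x y z b : Pt) : sg' x y b + sg' y z b + sg' z x b = sg' x y z := by
  simp only [sg']; ring

lemma bary1 (x y z b : Pt) :
    sg' x y z * b.1 = sg' y z b * x.1 + sg' z x b * y.1 + sg' x y b * z.1 := by
  simp only [sg']; ring

lemma bary2 (x y z b : Pt) :
    sg' x y z * b.2 = sg' y z b * x.2 + sg' z x b * y.2 + sg' x y b * z.2 := by
  simp only [sg']; ring

lemma sg'_affine (x y p q : Pt) (a b : ℝ) (hab : a + b = 1) :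
    sg' x y (a • p + b • q) = a * sg' x y p + b * sg' x y q := by
  have hb : b = 1 - a := by linarith
  subst hb
  simp only [sg', Prod.fst_add, Prod.snd_add, Prod.smul_fst, Prod.smul_snd, smul_eq_mul]
  ring

lemma mem_line_iff' {x y : Pt} (hxy : x ≠ y) (p : Pt) :
    p ∈ (affineSpan ℝ ({x, y} : Set Pt) : Set Pt) ↔ sg' x y p = 0 := by
  have hp : p = (p - x) +ᵥ x := by simp
  constructor
  · intro hmem
    rw [SetLike.mem_coe, hp, vadd_left_mem_affineSpan_pair] at hmem
    obtain ⟨r, hr⟩ := hmem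
    have h1 : r * (y.1 - x.1) = p.1 - x.1 := by
      have := congrArg Prod.fst hr
      simpa [vsub_eq_sub, Prod.smul_fst, smul_eq_mul] using this
    have h2 : r * (y.2 - x.2) = p.2 - x.2 := by
      have := congrArg Prod.snd hr
      simpa [vsub_eq_sub, Prod.smul_snd, smul_eq_mul] using this
    simp only [sg']
    linear_combination (y.2 - x.2) * h1 - (y.1 - x.1) * h2
  · intro h0
    rw [SetLike.mem_coe, hp, vadd_left_mem_affineSpan_pair]
    have hne : y.1 - x.1 ≠ 0 ∨ y.2 - x.2 ≠ 0 := by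
      by_contra hc
      push_neg at hc
      apply hxy
      have : x.1 = y.1 := by linarith [hc.1]
      have h2 : x.2 = y.2 := by linarith [hc.2]
      exact Prod.ext this h2
    simp only [sg'] at h0
    rcases hne with h | h
    · refine ⟨(p.1 - x.1) / (y.1 - x.1), ?_⟩
      apply Prod.ext
      · simp only [vsub_eq_sub, Prod.smul_fst, Prod.fst_sub, smul_eq_mul]
        field_simp
      · simp only [vsub_eq_sub, Prod.smul_snd, Prod.snd_sub, smul_eq_mul]
        field_simp
        linear_combination -h0
    · refine ⟨(p.2 - x.2) / (y.2 - x.2), ?_⟩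
      apply Prod.ext
      · simp only [vsub_eq_sub, Prod.smul_fst, Prod.fst_sub, smul_eq_mul]
        field_simp
        linear_combination h0
      · simp only [vsub_eq_sub, Prod.smul_snd, Prod.snd_sub, smul_eq_mul]
        field_simp

lemma hull_pos {x y : Pt} {B : Finset Pt} (h : ∀ b ∈ B, 0 < sg' x y b) :
    ∀ p ∈ convexHull ℝ (B : Set Pt), 0 < sg' x y p := by
  have hconv : Convex ℝ {p : Pt | 0 < sg' x y p} := by
    intro p hp q hq a b ha hb hab
    rw [Set.mem_setOf_eq, sg'_affine x y p q a b hab]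
    rcases ha.eq_or_lt with h0 | h0
    · have hb1 : b = 1 := by linarith
      subst hb1; rw [← h0]; simpa using hq
    · nlinarith [mul_nonneg hb hq.le, mul_pos h0 hp]
  intro p hp
  exact convexHull_min h hconv hp

lemma mem_hull_triangle {x y z b : Pt} (hT : 0 < sg' x y z) (ha : 0 < sg' y z b)
    (hb : 0 ≤ sg' z x b) (hc : 0 < sg' x y b) :
    b ∈ convexHull ℝ ({x, y, z} : Set Pt) := by
  set α := sg' y z b with hα
  set β := sg' z x b with hβ
  set γ := sg' x y b with hγ
  set T := sg' x y z with hTdef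
  have hsum : γ + α + β = T := sg'_cycle x y z b
  have hs : 0 < β + γ := by linarith
  have hT0 : T ≠ 0 := ne_of_gt hT
  have hs0 : β + γ ≠ 0 := ne_of_gt hs
  set q : Pt := (β/(β+γ)) • y + (γ/(β+γ)) • z with hqdef
  have hq_mem : q ∈ convexHull ℝ ({x, y, z} : Set Pt) := by
    have hy : y ∈ convexHull ℝ ({x, y, z} : Set Pt) :=
      subset_convexHull ℝ _ (by simp)
    have hz : z ∈ convexHull ℝ ({x, y, z} : Set Pt) :=
      subset_convexHull ℝ _ (by simp)
    have : q ∈ segment ℝ y z := by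
      refine ⟨β/(β+γ), γ/(β+γ), by positivity, by positivity, by field_simp, rfl⟩
    exact (convex_convexHull ℝ _).segment_subset hy hz this
  have hx_mem : x ∈ convexHull ℝ ({x, y, z} : Set Pt) :=
    subset_convexHull ℝ _ (by simp)
  have hb1 := bary1 x y z b
  have hb2 := bary2 x y z b
  rw [← hα, ← hβ, ← hγ, ← hTdef] at hb1 hb2
  have hbq : b ∈ segment ℝ x q := by
    refine ⟨α/T, (β+γ)/T, by positivity, by positivity, by field_simp; linarith, ?_⟩
    apply Prod.ext
    · simp only [hqdef, Prod.fst_add, Prod.smul_fst, smul_eq_mul]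
      field_simp
      linear_combination -hb1
    · simp only [hqdef, Prod.snd_add, Prod.smul_snd, smul_eq_mul]
      field_simp
      linear_combination -hb2
  exact (convex_convexHull ℝ _).segment_subset hx_mem hq_mem hbq


lemma sg'_ne {A B : Finset Pt} (sep : Separated A B) (gp : GenPos (A ∪ B))
    {x y b : Pt} (hx : x ∈ A) (hy : y ∈ A) (hb : b ∈ B) (hxy : x ≠ y) :
    sg' x y b ≠ 0 := by
  intro h0
  have hAB : ∀ p ∈ A, p ∉ B := by
    intro p hpA hpB
    exact Set.disjoint_left.mp sep (subset_convexHull ℝ _ hpA) (subset_convexHull ℝ _ hpB)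
  have hbx : b ≠ x := fun h => hAB x hx (h ▸ hb)
  have hby : b ≠ y := fun h => hAB y hy (h ▸ hb)
  have hmem : b ∈ (affineSpan ℝ ({x, y} : Set Pt) : Set Pt) := (mem_line_iff' hxy b).mpr h0
  have hcol : Collinear ℝ ({b, x, y} : Set Pt) :=
    collinear_insert_of_mem_affineSpan_pair hmem
  exact gp b (Finset.mem_union_right _ hb) x (Finset.mem_union_left _ hx)
    y (Finset.mem_union_left _ hy) hbx hby hxy hcol

/-- For nonempty finite separated sets `A`, `B` with `A ∪ B` in general position,
`<_B` is a strict partial order on `A` (asymmetric and transitive), and two distinct points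
`x, y ∈ A` are incomparable in `<_B` iff the line through `x` and `y` meets `conv(B)`. -/
theorem stmt10 :
    ∀ A B : Finset Pt, A.Nonempty → B.Nonempty → Separated A B → GenPos (A ∪ B) →
      (∀ x ∈ A, ∀ y ∈ A, LtRel B x y → ¬ LtRel B y x) ∧
      (∀ x ∈ A, ∀ y ∈ A, ∀ z ∈ A, LtRel B x y → LtRel B y z → LtRel B x z) ∧
      (∀ x ∈ A, ∀ y ∈ A, x ≠ y →
        (Incomp B x y ↔
          ((affineSpan ℝ ({x, y} : Set Pt) : Set Pt) ∩ convexHull ℝ (B : Set Pt)).Nonempty)) := by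
  intro A B hA hB sep gp
  have hAB : ∀ p ∈ A, p ∉ B := by
    intro p hpA hpB
    exact Set.disjoint_left.mp sep (subset_convexHull ℝ _ hpA) (subset_convexHull ℝ _ hpB)
  refine ⟨?_, ?_, ?_⟩
  · -- asymmetry
    rintro x _ y _ ⟨hxy, h1⟩ ⟨_, h2⟩
    obtain ⟨b, hb⟩ := hB
    have e1 : 0 < sg' x y b := h1 b hb
    have e2 : 0 < sg' y x b := h2 b hb
    rw [sg'_swap] at e2
    linarith
  · -- transitivity
    rintro x hx y hy z hz ⟨hxy, h1⟩ ⟨hyz, h2⟩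
    have hxz : x ≠ z := by
      intro h
      subst h
      obtain ⟨b, hb⟩ := hB
      have e1 : 0 < sg' x y b := h1 b hb
      have e2 : 0 < sg' y x b := h2 b hb
      rw [sg'_swap] at e2
      linarith
    refine ⟨hxz, ?_⟩
    intro b hb
    show 0 < sg' x z b
    have e1 : 0 < sg' x y b := h1 b hb
    have e2 : 0 < sg' y z b := h2 b hb
    have hcyc := sg'_cycle x y z b
    have hsw : sg' z x b = - sg' x z b := sg'_swap x z b
    by_cases hT : sg' x y z ≤ 0
    · linarith
    · push_neg at hT
      by_contra hle
      push_neg at hle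
      have hbmem : b ∈ convexHull ℝ ({x, y, z} : Set Pt) :=
        mem_hull_triangle hT e2 (by linarith) e1
      have hsub : convexHull ℝ ({x, y, z} : Set Pt) ⊆ convexHull ℝ (A : Set Pt) := by
        apply convexHull_mono
        intro p hp
        simp only [Set.mem_insert_iff, Set.mem_singleton_iff] at hp
        rcases hp with rfl | rfl | rfl <;> simpa using ‹_ ∈ A›
      exact Set.disjoint_left.mp sep (hsub hbmem) (subset_convexHull ℝ _ hb)
  · -- incomparability criterion
    intro x hx y hy hxy
    constructor
    · rintro ⟨h1, h2⟩
      have hb1 : ∃ b ∈ B, sg' x y b < 0 := by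
        by_contra hc
        push_neg at hc
        exact h1 ⟨hxy, fun b hb => lt_of_le_of_ne (hc b hb)
          (Ne.symm (sg'_ne sep gp hx hy hb hxy))⟩
      have hb2 : ∃ b ∈ B, 0 < sg' x y b := by
        by_contra hc
        push_neg at hc
        refine h2 ⟨hxy.symm, fun b hb => ?_⟩
        show 0 < sg' y x b
        rw [sg'_swap]
        have := hc b hb
        have hne := sg'_ne sep gp hx hy hb hxy
        cases lt_or_eq_of_le this with
        | inl h => linarith
        | inr h => exact absurd h hne
      obtain ⟨b, hb, hu⟩ := hb1
      obtain ⟨b', hb', hv⟩ := hb2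
      set u := sg' x y b with hudef
      set v := sg' x y b' with hvdef
      set t : ℝ := u / (u - v) with htdef
      have huv : u - v < 0 := by linarith
      have ht0 : 0 ≤ t := by
        rw [htdef]
        exact le_of_lt (div_pos_iff.mpr (Or.inr ⟨hu, huv⟩))
      have ht1 : 1 - t ≥ 0 := by
        rw [htdef, ge_iff_le, sub_nonneg, div_le_one_iff]
        exact Or.inr (Or.inr ⟨huv, by linarith⟩)
      set p : Pt := (1 - t) • b + t • b' with hpdef
      have hsg : sg' x y p = 0 := by
        rw [hpdef, sg'_affine x y b b' (1 - t) t (by ring), ← hudef, ← hvdef, htdef]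
        have hne : u - v ≠ 0 := ne_of_lt huv
        field_simp
        ring
      refine ⟨p, (mem_line_iff' hxy p).mpr hsg, ?_⟩
      have hseg : p ∈ segment ℝ b b' := ⟨1 - t, t, ht1, ht0, by ring, rfl⟩
      exact (convex_convexHull ℝ _).segment_subset
        (subset_convexHull ℝ _ hb) (subset_convexHull ℝ _ hb') hseg
    · rintro ⟨p, hp1, hp2⟩
      have hsg : sg' x y p = 0 := (mem_line_iff' hxy p).mp hp1
      constructor
      · rintro ⟨_, h⟩
        have : 0 < sg' x y p := hull_pos (fun b hb => h b hb) p hp2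
        linarith
      · rintro ⟨_, h⟩
        have : 0 < sg' y x p := hull_pos (fun b hb => h b hb) p hp2
        rw [sg'_swap] at this
        linarith
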